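/- Let $A, B$ be negative operators (in the sense of Komatsu) on a Banach space $X$ with $D(A) \subseteq D(B)$ and $A - B$ extending to a bounded operator in a symmetrically normed operator ideal $\mathcal{I}$. Let $\varphi(z) = \int_{(0,\infty)} \frac{z}{t-z} d\mu(t)$ be a negative complete Bernstein function. Then $\varphi(A) - \varphi(B) \in \mathcal{I}$ and $\|\varphi(A)-\varphi(B)\|_{\mathcal{I}} \le M_A M_B \varphi'(-1) \|A-B\|_{\mathcal{I}}$, where $\varphi'(-1) = \int_{(0,\infty)} t\,d\mu(t)/(1+t)^2$. -/

import Mathlib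

open MeasureTheory Set

variable {X : Type*} [NormedAddCommGroup X] [NormedSpace ℂ X] [CompleteSpace X]

/-- `R` is the resolvent of the (possibly unbounded) operator `A` at the real point `t`,
i.e. `R` is an everywhere defined two-sided bounded inverse of `t•I - A`. -/
structure IsResolvent (A : X →ₗ.[ℂ] X) (t : ℝ) (R : X →L[ℂ] X) : Prop where
  mem : ∀ x : X, R x ∈ A.domain
  right_inv : ∀ x : X, (t : ℂ) • (R x) - A ⟨R x, mem x⟩ = x
  left_inv : ∀ x : A.domain, R ((t : ℂ) • (x : X) - A x) = x

/-- The sum of an unbounded operator and a bounded operator, defined on the domain of the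
unbounded one. -/
noncomputable def pAdd (A : X →ₗ.[ℂ] X) (V : X →L[ℂ] X) : X →ₗ.[ℂ] X where
  domain := A.domain
  toFun := A.toFun + (V : X →ₗ[ℂ] X).comp A.domain.subtype

/-- A symmetrically normed operator ideal in `L(X)`: a two-sided ideal with a complete norm
`inorm` dominating the operator norm and satisfying `‖A S B‖_I ≤ ‖A‖ ‖S‖_I ‖B‖`.
Completeness is encoded through closure under Bochner integration with a dominating
`I`-norm bound. -/
structure OperatorIdeal (X : Type*) [NormedAddCommGroup X] [NormedSpace ℂ X] where
  Mem : (X →L[ℂ] X) → Prop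
  inorm : (X →L[ℂ] X) → ℝ
  zero_mem : Mem 0
  add_mem : ∀ {S T}, Mem S → Mem T → Mem (S + T)
  smul_mem : ∀ (c : ℂ) {S}, Mem S → Mem (c • S)
  comp_mem : ∀ (A : X →L[ℂ] X) {S} (B : X →L[ℂ] X), Mem S → Mem (A.comp (S.comp B))
  inorm_nonneg : ∀ S, 0 ≤ inorm S
  inorm_add_le : ∀ S T, inorm (S + T) ≤ inorm S + inorm T
  inorm_smul : ∀ (c : ℂ) (S), inorm (c • S) = ‖c‖ * inorm S
  inorm_comp_le : ∀ (A S B : X →L[ℂ] X), Mem S →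
    inorm (A.comp (S.comp B)) ≤ ‖A‖ * inorm S * ‖B‖
  opNorm_le_inorm : ∀ S, Mem S → ‖S‖ ≤ inorm S
  integral_mem : ∀ (μ : MeasureTheory.Measure ℝ) (f : ℝ → (X →L[ℂ] X)) (g : ℝ → ℝ),
    MeasureTheory.Integrable g μ → (∀ᵐ t ∂μ, Mem (f t) ∧ inorm (f t) ≤ g t) →
    MeasureTheory.Integrable f μ →
    Mem (∫ t, f t ∂μ) ∧ inorm (∫ t, f t ∂μ) ≤ ∫ t, g t ∂μ

omit [CompleteSpace X] in
theorem resolvent_identity (A : X →ₗ.[ℂ] X) {s t : ℝ} {Rs Rt : X →L[ℂ] X}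
    (hs : IsResolvent A s Rs) (ht : IsResolvent A t Rt) :
    Rs - Rt = ((t - s : ℝ) : ℂ) • Rt.comp Rs := by
  ext x
  have hy : Rs x ∈ A.domain := hs.mem x
  have h1 : Rt ((t : ℂ) • (Rs x) - A ⟨Rs x, hy⟩) = Rs x := ht.left_inv ⟨Rs x, hy⟩
  have h2 : (s : ℂ) • (Rs x) - A ⟨Rs x, hy⟩ = x := hs.right_inv x
  have h3 : (t : ℂ) • (Rs x) - A ⟨Rs x, hy⟩
      = ((t - s : ℝ) : ℂ) • Rs x + ((s : ℂ) • (Rs x) - A ⟨Rs x, hy⟩) := by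
    push_cast; module
  rw [h3, h2] at h1
  rw [map_add, Rt.map_smul] at h1
  simp only [ContinuousLinearMap.sub_apply, ContinuousLinearMap.smul_apply,
    ContinuousLinearMap.comp_apply]
  exact (eq_sub_of_add_eq h1).symm

omit [CompleteSpace X] in
theorem resolvent_bounds (A : X →ₗ.[ℂ] X)
    (RA : ℝ → (X →L[ℂ] X))
    (hRA : ∀ t ≥ (0 : ℝ), IsResolvent A t (RA t))
    (MA : ℝ)
    (hMA : IsLUB ((fun t => (1 + t) * ‖RA t‖) '' Ioi (0 : ℝ)) MA) :
    (0 ≤ MA) ∧ (∀ t > (0:ℝ), ‖RA t‖ ≤ MA / (1 + t)) ∧ ContinuousOn RA (Ioi 0) := by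
  have hub : ∀ t > (0:ℝ), (1 + t) * ‖RA t‖ ≤ MA := fun t ht =>
    hMA.1 ⟨t, mem_Ioi.mpr ht, rfl⟩
  have hMA0 : 0 ≤ MA := le_trans (by positivity) (hub 1 one_pos)
  have hbd : ∀ t > (0:ℝ), ‖RA t‖ ≤ MA / (1 + t) := by
    intro t ht
    rw [le_div_iff₀ (by linarith)]
    linarith [hub t ht]
  have hbd' : ∀ t > (0:ℝ), ‖RA t‖ ≤ MA := by
    intro t ht
    refine (hbd t ht).trans ?_
    rw [div_le_iff₀ (by linarith)]
    nlinarith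
  refine ⟨hMA0, hbd, ?_⟩
  refine (LipschitzOnWith.of_dist_le_mul (K := Real.toNNReal (MA * MA)) ?_).continuousOn
  intro s hs t ht
  rw [dist_eq_norm, dist_eq_norm]
  have hid := resolvent_identity A (hRA s (le_of_lt hs)) (hRA t (le_of_lt ht))
  rw [hid]
  rw [norm_smul ((t - s : ℝ) : ℂ) ((RA t).comp (RA s))]
  have h1 : ‖((t - s : ℝ) : ℂ)‖ = |t - s| := by
    rw [Complex.norm_real, Real.norm_eq_abs]
  rw [h1]
  have h2 : ‖(RA t).comp (RA s)‖ ≤ MA * MA := by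
    refine ((RA t).opNorm_comp_le (RA s)).trans ?_
    exact mul_le_mul (hbd' t ht) (hbd' s hs) (norm_nonneg _) hMA0
  have h3 : Real.toNNReal (MA * MA) * ‖s - t‖ = (MA * MA) * |t - s| := by
    rw [Real.coe_toNNReal _ (by positivity), Real.norm_eq_abs, abs_sub_comm]
  calc |t - s| * ‖(RA t).comp (RA s)‖ ≤ |t - s| * (MA * MA) :=
        mul_le_mul_of_nonneg_left h2 (abs_nonneg _)
    _ = Real.toNNReal (MA * MA) * ‖s - t‖ := by rw [h3]; ring

/-- Lemma 2(i): for negative operators `A, B` with `D(A) ⊆ D(B)` whose difference extends to an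
operator `W` in a symmetrically normed ideal `I`, the operator
`φ(A) - φ(B) = ∫ t R(t,A) (A-B) R(t,B) dμ(t)` belongs to `I` and
`‖φ(A)-φ(B)‖_I ≤ M_A M_B φ'(-1) ‖A-B‖_I` where `φ'(-1) = ∫ t/(1+t)² dμ(t)`. -/
theorem Bernstein_difference_negative
    (I : OperatorIdeal X)
    (A B : X →ₗ.[ℂ] X)
    (hAclosed : IsClosed (A.graph : Set (X × X)))
    (hBclosed : IsClosed (B.graph : Set (X × X)))
    (hAdense : Dense (A.domain : Set X)) (hBdense : Dense (B.domain : Set X))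
    (RA RB : ℝ → (X →L[ℂ] X))
    (hRA : ∀ t ≥ (0 : ℝ), IsResolvent A t (RA t))
    (hRB : ∀ t ≥ (0 : ℝ), IsResolvent B t (RB t))
    (MA MB : ℝ)
    (hMA : IsLUB ((fun t => (1 + t) * ‖RA t‖) '' Ioi (0 : ℝ)) MA)
    (hMB : IsLUB ((fun t => (1 + t) * ‖RB t‖) '' Ioi (0 : ℝ)) MB)
    (hdom : A.domain ≤ B.domain)
    (W : X →L[ℂ] X) (hW : I.Mem W)
    (hWext : ∀ x : A.domain, W (x : X) = A x - B ⟨(x : X), hdom x.2⟩)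
    (μ : Measure ℝ) (hsupp : μ (Iic (0 : ℝ)) = 0)
    (hμ : Integrable (fun t => (1 + t)⁻¹) μ) :
    I.Mem (∫ t, (t : ℂ) • ((RA t).comp (W.comp (RB t))) ∂μ) ∧
      I.inorm (∫ t, (t : ℂ) • ((RA t).comp (W.comp (RB t))) ∂μ) ≤
        MA * MB * (∫ t, t / (1 + t) ^ 2 ∂μ) * I.inorm W := by
  obtain ⟨hMA0, hAbd, hAcont⟩ := resolvent_bounds A RA hRA MA hMA
  obtain ⟨hMB0, hBbd, hBcont⟩ := resolvent_bounds B RB hRB MB hMB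
  set f : ℝ → (X →L[ℂ] X) := fun t => (t : ℂ) • ((RA t).comp (W.comp (RB t))) with hf
  set g : ℝ → ℝ := fun t => MA * MB * (t / (1 + t) ^ 2) * I.inorm W with hg
  -- a.e. positivity
  have hae : ∀ᵐ t ∂μ, 0 < t := by
    rw [ae_iff]
    convert hsupp using 2
    ext t; simp [not_lt]
  -- the elementary inequality
  have hkey : ∀ t : ℝ, 0 < t → t / (1 + t) ^ 2 ≤ (1 + t)⁻¹ := by
    intro t ht
    have h0 : (0:ℝ) < 1 + t := by linarith
    calc t / (1 + t) ^ 2 ≤ (1 + t) / (1 + t) ^ 2 := by gcongr; linarith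
      _ = (1 + t)⁻¹ := by field_simp
  have hkey0 : ∀ t : ℝ, 0 < t → 0 ≤ t / (1 + t) ^ 2 := fun t ht => by positivity
  -- norm of the ℂ scalar
  have hnc : ∀ t : ℝ, 0 < t → ‖((t : ℝ) : ℂ)‖ = t := by
    intro t ht
    rw [Complex.norm_real, Real.norm_eq_abs, abs_of_pos ht]
  -- continuity of f on Ioi 0
  have hfc : ContinuousOn f (Ioi 0) := by
    refine ContinuousOn.smul (f := fun t : ℝ => (t : ℂ)) (g := fun t => (RA t).comp (W.comp (RB t))) ?_ ?_
    · exact Complex.continuous_ofReal.continuousOn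
    · exact hAcont.clm_comp (continuousOn_const.clm_comp hBcont)
  have hae' : ∀ᵐ t ∂μ, t ∈ Ioi (0:ℝ) := hae.mono fun t ht => mem_Ioi.mpr ht
  have hfm : AEStronglyMeasurable f μ := by
    haveI : SecondCountableTopologyEither ℝ (X →L[ℂ] X) :=
      secondCountableTopologyEither_of_left ℝ _
    have h1 : AEStronglyMeasurable f (μ.restrict (Ioi 0)) :=
      hfc.aestronglyMeasurable measurableSet_Ioi
    rwa [Measure.restrict_eq_self_of_ae_mem hae'] at h1
  -- the pointwise estimate for the operator norm
  have hptw : ∀ t : ℝ, 0 < t →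
      t * (‖RA t‖ * (‖W‖ * ‖RB t‖)) ≤ MA * MB * ‖W‖ * (1 + t)⁻¹ := by
    intro t ht
    have e1 : ‖RA t‖ * (‖W‖ * ‖RB t‖) ≤ (MA / (1 + t)) * (‖W‖ * (MB / (1 + t))) :=
      mul_le_mul (hAbd t ht)
        (mul_le_mul_of_nonneg_left (hBbd t ht) (norm_nonneg W))
        (mul_nonneg (norm_nonneg _) (norm_nonneg _))
        (div_nonneg hMA0 (by linarith))
    have h1 := mul_le_mul_of_nonneg_left e1 ht.le
    refine h1.trans ?_
    have h2 : t * ((MA / (1 + t)) * (‖W‖ * (MB / (1 + t))))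
        = MA * MB * ‖W‖ * (t / (1 + t) ^ 2) := by
      field_simp
    rw [h2]
    exact mul_le_mul_of_nonneg_left (hkey t ht) (by positivity)
  -- integrability of f
  have hfi : Integrable f μ := by
    refine Integrable.mono' (hμ.const_mul (MA * MB * ‖W‖)) hfm ?_
    filter_upwards [hae] with t ht
    have hft : f t = (t : ℂ) • ((RA t).comp (W.comp (RB t))) := rfl
    rw [hft, norm_smul ((t : ℝ) : ℂ) ((RA t).comp (W.comp (RB t))), hnc t ht]
    have e0 : ‖(RA t).comp (W.comp (RB t))‖ ≤ ‖RA t‖ * (‖W‖ * ‖RB t‖) :=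
      ((RA t).opNorm_comp_le _).trans
        (mul_le_mul_of_nonneg_left (W.opNorm_comp_le _) (norm_nonneg _))
    exact (mul_le_mul_of_nonneg_left e0 ht.le).trans (hptw t ht)
  -- integrability of g
  have hgi : Integrable g μ := by
    refine Integrable.mono' (hμ.const_mul (MA * MB * I.inorm W)) ?_ ?_
    · refine Measurable.aestronglyMeasurable ?_
      fun_prop
    · filter_upwards [hae] with t ht
      have hgt : g t = MA * MB * (t / (1 + t) ^ 2) * I.inorm W := rfl
      rw [hgt, Real.norm_eq_abs, abs_of_nonneg (mul_nonneg (mul_nonneg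
        (mul_nonneg hMA0 hMB0) (hkey0 t ht)) (I.inorm_nonneg W))]
      calc MA * MB * (t / (1 + t) ^ 2) * I.inorm W
          = MA * MB * I.inorm W * (t / (1 + t) ^ 2) := by ring
        _ ≤ MA * MB * I.inorm W * (1 + t)⁻¹ :=
            mul_le_mul_of_nonneg_left (hkey t ht)
              (mul_nonneg (mul_nonneg hMA0 hMB0) (I.inorm_nonneg W))
  -- the a.e. membership and inorm bound
  have hmem : ∀ᵐ t ∂μ, I.Mem (f t) ∧ I.inorm (f t) ≤ g t := by
    filter_upwards [hae] with t ht
    constructor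
    · exact I.smul_mem _ (I.comp_mem (RA t) (RB t) hW)
    · have hft : f t = (t : ℂ) • ((RA t).comp (W.comp (RB t))) := rfl
      have hgt : g t = MA * MB * (t / (1 + t) ^ 2) * I.inorm W := rfl
      rw [hft, hgt, I.inorm_smul, hnc t ht]
      have e1 : ‖RA t‖ * I.inorm W * ‖RB t‖
          ≤ (MA / (1 + t)) * I.inorm W * (MB / (1 + t)) :=
        mul_le_mul (mul_le_mul_of_nonneg_right (hAbd t ht) (I.inorm_nonneg W))
          (hBbd t ht) (norm_nonneg _)
          (mul_nonneg (div_nonneg hMA0 (by linarith)) (I.inorm_nonneg W))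
      calc t * I.inorm ((RA t).comp (W.comp (RB t)))
          ≤ t * (‖RA t‖ * I.inorm W * ‖RB t‖) :=
            mul_le_mul_of_nonneg_left (I.inorm_comp_le (RA t) W (RB t) hW) ht.le
        _ ≤ t * ((MA / (1 + t)) * I.inorm W * (MB / (1 + t))) :=
            mul_le_mul_of_nonneg_left e1 ht.le
        _ = MA * MB * (t / (1 + t) ^ 2) * I.inorm W := by
            field_simp
  obtain ⟨hm, hb⟩ := I.integral_mem μ f g hgi hmem hfi
  refine ⟨hm, hb.trans ?_⟩
  have : ∫ t, g t ∂μ = MA * MB * (∫ t, t / (1 + t) ^ 2 ∂μ) * I.inorm W := by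
    rw [hg]
    simp_rw [mul_assoc, MeasureTheory.integral_const_mul, MeasureTheory.integral_mul_const]
  exact le_of_eq this
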